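/- Let β ≥ 1 and let μ be a Borel probability measure on [0,1]³, with coordinates denoted (w, y, b). If ∫ σ_β(w − y) dμ ≥ 1/2 and ∫ σ_β(y − b) dμ ≥ 1/2, then ∫ b dμ ≤ β · (1 + exp(−β))/(1 − exp(−β)) · ∫ w dμ. -/

import Mathlib

open MeasureTheory

noncomputable def sigma (β t : ℝ) : ℝ := 1 / (1 + Real.exp (-(β * t)))

lemma exp_pos' (x:ℝ) : 0 < 1 + Real.exp x := by positivity

lemma sigma_pos (β t : ℝ) : 0 < sigma β t := by
  unfold sigma; positivity

lemma sigma_le_one (β t : ℝ) : sigma β t ≤ 1 := by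
  unfold sigma
  rw [div_le_one (exp_pos' _)]
  linarith [Real.exp_pos (-(β*t))]

lemma sigma_zero (β : ℝ) : sigma β 0 = 1/2 := by
  unfold sigma; simp [Real.exp_zero]; norm_num

lemma sigma_reflect (β t : ℝ) : sigma β (-t) = 1 - sigma β t := by
  unfold sigma
  have h1 := exp_pos' (-(β*t))
  have h2 := exp_pos' (-(β*(-t)))
  have he : Real.exp (-(β*(-t))) = (Real.exp (-(β*t)))⁻¹ := by
    rw [← Real.exp_neg]; ring_nf
  rw [he]
  have h3 := Real.exp_pos (-(β*t))
  field_simp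
  ring

lemma hasDerivAt_sigma (β x : ℝ) :
    HasDerivAt (sigma β) (β * Real.exp (-(β*x)) / (1 + Real.exp (-(β*x)))^2) x := by
  have h1 : HasDerivAt (fun t : ℝ => -(β*t)) (-β) x := by
    simpa [Pi.neg_def] using ((hasDerivAt_id x).const_mul β).neg
  have h2 : HasDerivAt (fun t : ℝ => Real.exp (-(β*t))) (Real.exp (-(β*x)) * (-β)) x :=
    (Real.hasDerivAt_exp _).comp x h1
  have h3 : HasDerivAt (fun t : ℝ => 1 + Real.exp (-(β*t))) (Real.exp (-(β*x)) * (-β)) x :=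
    h2.const_add 1
  have h4 : HasDerivAt (fun t => (1 + Real.exp (-(β*t)))⁻¹) _ x := h3.inv (ne_of_gt (exp_pos' _))
  have : sigma β = fun t => (1 + Real.exp (-(β*t)))⁻¹ := by
    funext t; unfold sigma; rw [one_div]
  rw [this]
  convert h4 using 1
  field_simp

lemma sigma_lipschitz (β : ℝ) (hβ : 0 ≤ β) {s t : ℝ} (hst : s ≤ t) :
    sigma β t - sigma β s ≤ β/4 * (t - s) := by
  have hmono : Monotone (fun x => β/4 * x - sigma β x) := by
    apply monotone_of_deriv_nonneg
    · intro x
      exact ((hasDerivAt_id x).const_mul (β/4)).sub (hasDerivAt_sigma β x) |>.differentiableAt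
    · intro x
      have hd : HasDerivAt (fun x => β/4 * x - sigma β x)
          (β/4 - β * Real.exp (-(β*x)) / (1 + Real.exp (-(β*x)))^2) x := by
        have := ((hasDerivAt_id x).const_mul (β/4)).sub (hasDerivAt_sigma β x)
        simpa [Pi.sub_def] using this
      rw [hd.deriv]
      have hE := Real.exp_pos (-(β*x))
      rw [sub_nonneg, div_le_div_iff₀ (by positivity) (by norm_num)]
      nlinarith [sq_nonneg (1 - Real.exp (-(β*x)))]
  have := hmono hst
  simp only at this
  linarith

lemma sigma_concave (β : ℝ) (hβ : 0 ≤ β) : ConcaveOn ℝ (Set.Icc (0:ℝ) 1) (sigma β) := by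
  apply concaveOn_of_deriv2_nonpos (convex_Icc 0 1)
  · exact fun x _ => ((hasDerivAt_sigma β x).continuousAt).continuousWithinAt
  · exact fun x _ => ((hasDerivAt_sigma β x).differentiableAt).differentiableWithinAt
  · intro x _
    have hder : deriv (sigma β) = fun x => β * Real.exp (-(β*x)) / (1 + Real.exp (-(β*x)))^2 := by
      funext y; exact (hasDerivAt_sigma β y).deriv
    rw [hder]
    have h1 : HasDerivAt (fun t : ℝ => -(β*t)) (-β) x := by
      simpa [Pi.neg_def] using ((hasDerivAt_id x).const_mul β).neg
    have h2 : HasDerivAt (fun t : ℝ => Real.exp (-(β*t))) (Real.exp (-(β*x)) * (-β)) x :=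
      (Real.hasDerivAt_exp _).comp x h1
    have hnum : HasDerivAt (fun t : ℝ => β * Real.exp (-(β*t))) (β * (Real.exp (-(β*x)) * (-β))) x :=
      h2.const_mul β
    have hden : HasDerivAt (fun t : ℝ => (1 + Real.exp (-(β*t)))^2)
        (2 * (1 + Real.exp (-(β*x))) * (Real.exp (-(β*x)) * (-β))) x := by
      have : HasDerivAt (fun t : ℝ => (1 + Real.exp (-(β*t)))^2) _ x := (h2.const_add 1).pow 2
      convert this using 1; ring
    exact (hnum.div hden (by positivity)).differentiableAt.differentiableWithinAt
  · intro x hx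
    rw [interior_Icc] at hx
    have hder : deriv (sigma β) = fun x => β * Real.exp (-(β*x)) / (1 + Real.exp (-(β*x)))^2 := by
      funext y; exact (hasDerivAt_sigma β y).deriv
    simp only [Function.iterate_succ, Function.iterate_zero, Function.comp_apply, Function.id_def]
    rw [hder]
    have h1 : HasDerivAt (fun t : ℝ => -(β*t)) (-β) x := by
      simpa [Pi.neg_def] using ((hasDerivAt_id x).const_mul β).neg
    have h2 : HasDerivAt (fun t : ℝ => Real.exp (-(β*t))) (Real.exp (-(β*x)) * (-β)) x :=
      (Real.hasDerivAt_exp _).comp x h1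
    have hnum : HasDerivAt (fun t : ℝ => β * Real.exp (-(β*t))) (β * (Real.exp (-(β*x)) * (-β))) x :=
      h2.const_mul β
    have hden : HasDerivAt (fun t : ℝ => (1 + Real.exp (-(β*t)))^2)
        (2 * (1 + Real.exp (-(β*x))) * (Real.exp (-(β*x)) * (-β))) x := by
      have : HasDerivAt (fun t : ℝ => (1 + Real.exp (-(β*t)))^2) _ x := (h2.const_add 1).pow 2
      convert this using 1; ring
    have hdd := hnum.div hden (by positivity)
    rw [show deriv (fun x => β * Real.exp (-(β * x)) / (1 + Real.exp (-(β * x))) ^ 2) x = _ from hdd.deriv]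
    set E := Real.exp (-(β*x)) with hEdef
    have hE : 0 < E := Real.exp_pos _
    have hE1 : E ≤ 1 := by
      rw [hEdef]
      apply Real.exp_le_one_iff.mpr  -- maybe wrong name
      nlinarith [hx.1]
    have hden4 : (0:ℝ) < ((1+E)^2)^2 := by positivity
    rw [div_nonpos_iff]
    right
    constructor
    · have : β * (E * -β) * (1 + E) ^ 2 - β * E * (2 * (1 + E) * (E * -β))
          = -(β^2 * E * (1+E) * (1-E)) := by ring
      rw [this, neg_nonpos]
      have h1E : (0:ℝ) ≤ 1 - E := by linarith
      positivity
    · positivity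

lemma sigma_secant (β : ℝ) (hβ : 0 ≤ β) {b : ℝ} (hb : b ∈ Set.Icc (0:ℝ) 1) :
    (1-b) * (1/2) + b * sigma β 1 ≤ sigma β b := by
  have hc := (sigma_concave β hβ).2 (Set.mem_Icc.mpr ⟨le_refl 0, zero_le_one⟩)
    (Set.mem_Icc.mpr ⟨zero_le_one, le_refl 1⟩) (by linarith [hb.2] : (0:ℝ) ≤ 1-b) hb.1
    (by ring)
  have h0 : (1-b) • (0:ℝ) + b • (1:ℝ) = b := by simp
  rw [h0] at hc
  have := sigma_zero β
  simpa [this, smul_eq_mul] using hc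

lemma sigma_triangle (β : ℝ) {y : ℝ} (hy : 0 ≤ β * y) (b : ℝ) :
    sigma β (y - b) ≤ 2 * sigma β y - sigma β b := by
  set P := Real.exp (-(β*y)) with hP
  set Q := Real.exp (-(β*b)) with hQ
  have hPpos : 0 < P := Real.exp_pos _
  have hQpos : 0 < Q := Real.exp_pos _
  have hP1 : P ≤ 1 := Real.exp_le_one_iff.mpr (by linarith)
  have hPQ : Real.exp (-(β*(y-b))) = P * Q⁻¹ := by
    rw [hP, hQ, ← Real.exp_neg, ← Real.exp_add]; ring_nf
  unfold sigma
  rw [hPQ]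
  show 1/(1+P*Q⁻¹) ≤ 2*(1/(1+P)) - 1/(1+Q)
  have hd1 : (1:ℝ)+P*Q⁻¹ = (Q+P)/Q := by field_simp
  rw [hd1, one_div_div, ← sub_nonneg]
  have expand : 2*(1/(1+P)) - 1/(1+Q) - Q/(Q+P)
      = ((1-P)*(P+Q^2)) / ((1+P)*((1+Q)*(Q+P))) := by
    field_simp
    ring
  rw [expand]
  apply div_nonneg
  · nlinarith [sq_nonneg Q]
  · positivity

lemma certificate (β : ℝ) (hβ : 0 ≤ β) {w y b : ℝ} (hw : 0 ≤ w) (hy : 0 ≤ y)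
    (hb : b ∈ Set.Icc (0:ℝ) 1) :
    (sigma β 1 - 1/2) * b + 2 * sigma β (w-y) + sigma β (y-b) ≤ β/2 * w + 3/2 := by
  have hlip : sigma β (w-y) - sigma β (-y) ≤ β/4 * w := by
    have := sigma_lipschitz β hβ (s := -y) (t := w-y) (by linarith)
    calc sigma β (w-y) - sigma β (-y) ≤ β/4 * ((w-y) - (-y)) := this
      _ = β/4 * w := by ring
  have hrefl : sigma β (-y) = 1 - sigma β y := sigma_reflect β y
  have hsec : (1-b) * (1/2) + b * sigma β 1 ≤ sigma β b := sigma_secant β hβ hb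
  have htri : sigma β (y - b) ≤ 2 * sigma β y - sigma β b :=
    sigma_triangle β (mul_nonneg hβ hy) b
  nlinarith

lemma sigma_continuous (β : ℝ) : Continuous (sigma β) := by
  unfold sigma
  apply Continuous.div continuous_const
  · exact continuous_const.add ((continuous_const.mul continuous_id).neg.rexp)
  · intro x; positivity

theorem copeland_key_case (β : ℝ) (hβ : 1 ≤ β)
    (μ : Measure (ℝ × ℝ × ℝ)) [IsProbabilityMeasure μ]
    (hsupp : ∀ᵐ p ∂μ, p.1 ∈ Set.Icc (0:ℝ) 1 ∧ p.2.1 ∈ Set.Icc (0:ℝ) 1 ∧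
      p.2.2 ∈ Set.Icc (0:ℝ) 1)
    (h1 : (∫ p, sigma β (p.1 - p.2.1) ∂μ) ≥ 1/2)
    (h2 : (∫ p, sigma β (p.2.1 - p.2.2) ∂μ) ≥ 1/2) :
    (∫ p, p.2.2 ∂μ) ≤ β * ((1 + Real.exp (-β)) / (1 - Real.exp (-β))) * (∫ p, p.1 ∂μ) := by
  have hβ0 : (0:ℝ) ≤ β := by linarith
  set E := Real.exp (-β) with hEdef
  have hE0 : 0 < E := Real.exp_pos _
  have hE1 : E < 1 := by
    rw [hEdef]
    apply Real.exp_lt_one_iff.mpr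
    linarith
  set a := sigma β 1 - 1/2 with hadef
  have haval : a = (1-E)/(2*(1+E)) := by
    rw [hadef]
    unfold sigma
    rw [show -(β*1) = -β by ring, ← hEdef]
    field_simp
    ring
  have ha : 0 < a := by
    have h1E : (0:ℝ) < 1 - E := by linarith
    rw [haval]; positivity
  -- continuity
  have hc1 : Continuous (fun p : ℝ×ℝ×ℝ => sigma β (p.1 - p.2.1)) :=
    (sigma_continuous β).comp (continuous_fst.sub (continuous_fst.comp continuous_snd))
  have hc2 : Continuous (fun p : ℝ×ℝ×ℝ => sigma β (p.2.1 - p.2.2)) :=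
    (sigma_continuous β).comp ((continuous_fst.comp continuous_snd).sub
      (continuous_snd.comp continuous_snd))
  -- integrability
  have hib : Integrable (fun p : ℝ×ℝ×ℝ => p.2.2) μ := by
    apply Integrable.mono' (integrable_const 1)
      (show Continuous (fun p : ℝ×ℝ×ℝ => p.2.2) by fun_prop).aestronglyMeasurable
    filter_upwards [hsupp] with p hp
    rw [Real.norm_eq_abs, abs_le]
    exact ⟨by linarith [hp.2.2.1], hp.2.2.2⟩
  have hiw : Integrable (fun p : ℝ×ℝ×ℝ => p.1) μ := by
    apply Integrable.mono' (integrable_const 1) continuous_fst.aestronglyMeasurable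
    filter_upwards [hsupp] with p hp
    rw [Real.norm_eq_abs, abs_le]
    exact ⟨by linarith [hp.1.1], hp.1.2⟩
  have hi1 : Integrable (fun p : ℝ×ℝ×ℝ => sigma β (p.1 - p.2.1)) μ := by
    apply Integrable.mono' (integrable_const 1) hc1.aestronglyMeasurable
    filter_upwards with p
    rw [Real.norm_eq_abs, abs_le]
    exact ⟨by linarith [sigma_pos β (p.1-p.2.1)], sigma_le_one β _⟩
  have hi2 : Integrable (fun p : ℝ×ℝ×ℝ => sigma β (p.2.1 - p.2.2)) μ := by
    apply Integrable.mono' (integrable_const 1) hc2.aestronglyMeasurable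
    filter_upwards with p
    rw [Real.norm_eq_abs, abs_le]
    exact ⟨by linarith [sigma_pos β (p.2.1-p.2.2)], sigma_le_one β _⟩
  have hiA : Integrable (fun p : ℝ×ℝ×ℝ => a * p.2.2) μ := hib.const_mul a
  have hiB : Integrable (fun p : ℝ×ℝ×ℝ => 2 * sigma β (p.1 - p.2.1)) μ := hi1.const_mul 2
  have hiAB : Integrable (fun p : ℝ×ℝ×ℝ => a * p.2.2 + 2 * sigma β (p.1 - p.2.1)) μ :=
    hiA.add hiB
  have hiL : Integrable (fun p : ℝ×ℝ×ℝ =>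
      a * p.2.2 + 2 * sigma β (p.1 - p.2.1) + sigma β (p.2.1 - p.2.2)) μ := hiAB.add hi2
  have hiW : Integrable (fun p : ℝ×ℝ×ℝ => β/2 * p.1) μ := hiw.const_mul (β/2)
  have hiR : Integrable (fun p : ℝ×ℝ×ℝ => β/2 * p.1 + 3/2) μ := hiW.add (integrable_const _)
  -- pointwise certificate a.e.
  have hpt : ∀ᵐ p ∂μ, a * p.2.2 + 2 * sigma β (p.1 - p.2.1) + sigma β (p.2.1 - p.2.2)
      ≤ β/2 * p.1 + 3/2 := by
    filter_upwards [hsupp] with p hp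
    exact certificate β hβ0 hp.1.1 hp.2.1.1 hp.2.2
  have key := integral_mono_ae hiL hiR hpt
  rw [integral_add hiAB hi2, integral_add hiA hiB, integral_add hiW (integrable_const _),
      integral_const_mul, integral_const_mul, integral_const_mul, integral_const] at key
  simp only [measure_univ, ENNReal.toReal_one, smul_eq_mul, one_mul, probReal_univ] at key
  have key2 : a * (∫ p, p.2.2 ∂μ) ≤ β/2 * (∫ p, p.1 ∂μ) := by linarith
  have heq : β * ((1+E)/(1-E)) * (∫ p, p.1 ∂μ) = (β/2 * (∫ p, p.1 ∂μ)) / a := by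
    rw [haval]
    have h1E : (1:ℝ) - E ≠ 0 := by linarith
    field_simp
  rw [heq, le_div_iff₀ ha]
  nlinarith
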